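/- Let Y be a continuously differentiable real-valued function on ℝ^d, 2π-periodic in each variable, let Ω ∈ ℝ^d, and suppose 1 + Ω·∂Y(φ) > 0 for all φ and that the induced map Φ̂: T^d → T^d, φ ↦ φ + Y(φ)Ω (mod 2π), is a bijection of the torus, with inverse Φ. Let m be continuous and 2π-periodic, and define m'(φ') = (1 + Ω·∂Y(Φ(φ')))² m(Φ(φ')). Then ⟨m'⟩ = (2π)^{-d} ∫_{T^d} (1 + Ω·∂Y(φ))³ m(φ) dφ, and consequently |⟨m'⟩ − ⟨m⟩| ≤ (sup_{T^d}|m|) · (3η + 3η² + η³), where η = sup_{T^d} |Ω·∂Y(φ)|. -/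

import Mathlib

open scoped Real
open MeasureTheory

noncomputable section

/-- The fundamental domain `[0,2π]^d` of the torus `T^d`. -/
def boxT (d : ℕ) : Set (Fin d → ℝ) := Set.Icc 0 (fun _ => 2 * π)

/-- The mean value `⟨u⟩ = (2π)^{-d} ∫_{T^d} u(φ) dφ`. -/
def meanT (d : ℕ) (u : (Fin d → ℝ) → ℝ) : ℝ :=
  ((2 * π) ^ d)⁻¹ * ∫ x in boxT d, u x

/-- The gradient `∂W/∂φ` of a real-valued function of `φ ∈ ℝ^d`. -/
def gradR {d : ℕ} (W : (Fin d → ℝ) → ℝ) (φ : Fin d → ℝ) : Fin d → ℝ :=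
  fun i => fderiv ℝ W φ (Pi.single i 1)

/-- Equality modulo `2πℤ^d`. -/
def eqMod2pi {d : ℕ} (x y : Fin d → ℝ) : Prop := ∀ i, ∃ k : ℤ, x i = y i + 2 * π * k

variable {d : ℕ}

def LatT (d : ℕ) : AddSubgroup (Fin d → ℝ) :=
  AddSubgroup.pi Set.univ fun _ => AddSubgroup.zmultiples (2 * π)

lemma mem_LatT {v : Fin d → ℝ} : v ∈ LatT d ↔ ∀ i, ∃ k : ℤ, v i = 2 * π * k := by
  simp only [LatT, AddSubgroup.mem_pi, Set.mem_univ, forall_true_left,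
    AddSubgroup.mem_zmultiples_iff]
  refine forall_congr' fun i => exists_congr fun k => ?_
  rw [zsmul_eq_mul, eq_comm, mul_comm]

/-- single-coordinate integer periodicity from single-coordinate `2π` periodicity. -/
lemma per_step_int {α : Type*} (u : (Fin d → ℝ) → α)
    (h : ∀ (φ : Fin d → ℝ) (i : Fin d),
      u (fun j => φ j + if j = i then 2 * π else 0) = u φ)
    (i : Fin d) (k : ℤ) (φ : Fin d → ℝ) :
    u (fun j => φ j + if j = i then 2 * π * k else 0) = u φ := by
  induction k using Int.induction_on generalizing φ with
  | zero => simp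
  | succ k ih =>
    have h1 : (fun j => φ j + if j = i then 2 * π * ((k : ℤ) + 1 : ℤ) else 0)
        = fun j => ((fun j' => φ j' + if j' = i then 2 * π * (k : ℤ) else 0) j)
          + if j = i then 2 * π else 0 := by
      funext j
      by_cases hj : j = i <;> simp [hj] <;> push_cast <;> ring
    rw [h1, h _ i, ih]
  | pred k ih =>
    have h1 : (fun j => φ j + if j = i then 2 * π * (-(k : ℤ) : ℤ) else 0)
        = fun j => ((fun j' => φ j' + if j' = i then 2 * π * (-(k : ℤ) - 1 : ℤ) else 0) j)
          + if j = i then 2 * π else 0 := by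
      funext j
      by_cases hj : j = i <;> simp [hj] <;> push_cast <;> ring
    have := h (fun j' => φ j' + if j' = i then 2 * π * (-(k : ℤ) - 1 : ℤ) else 0) i
    rw [← h1] at this
    rw [← this]
    exact ih φ

/-- full lattice periodicity. -/
lemma per_lattice {α : Type*} (u : (Fin d → ℝ) → α)
    (h : ∀ (φ : Fin d → ℝ) (i : Fin d),
      u (fun j => φ j + if j = i then 2 * π else 0) = u φ)
    (φ : Fin d → ℝ) {v : Fin d → ℝ} (hv : v ∈ LatT d) :
    u (φ + v) = u φ := by
  classical
  have key : ∀ s : Finset (Fin d), u (fun j => φ j + if j ∈ s then v j else 0) = u φ := by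
    intro s
    induction s using Finset.induction_on with
    | empty => simp
    | insert i s hi ih =>
      obtain ⟨k, hk⟩ := mem_LatT.mp hv i
      have h1 : (fun j => φ j + if j ∈ insert i s then v j else 0)
          = fun j => ((fun j' => φ j' + if j' ∈ s then v j' else 0) j)
            + if j = i then 2 * π * k else 0 := by
        funext j
        by_cases hj : j = i
        · subst hj; simp [hi, ← hk]
        · by_cases hjs : j ∈ s <;> simp [hj, hjs]
      rw [h1, per_step_int u h i k, ih]
  have := key Finset.univ
  simp at this; exact this

lemma latt_small {v : Fin d → ℝ} (hv : v ∈ LatT d) (h : ∀ i, |v i| < 2 * π) : v = 0 := by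
  funext i
  obtain ⟨k, hk⟩ := mem_LatT.mp hv i
  have hπ : (0:ℝ) < 2 * π := by positivity
  have : |(k : ℝ)| < 1 := by
    have := h i
    rw [hk, abs_mul, abs_of_pos hπ] at this
    nlinarith [abs_nonneg (k:ℝ)]
  have h1 : |k| < 1 := by exact_mod_cast this
  have : k = 0 := by rw [abs_lt] at h1; omega
  simp [hk, this]

def BoxI (d : ℕ) : Set (Fin d → ℝ) := Set.univ.pi fun _ => Set.Ico 0 (2 * π)

lemma measurableSet_BoxI : MeasurableSet (BoxI d) :=
  MeasurableSet.univ_pi fun _ => measurableSet_Ico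

lemma exists_unique_red (x : Fin d → ℝ) :
    ∃! g : LatT d, (g : Fin d → ℝ) + x ∈ BoxI d := by
  have hπ : (0:ℝ) < 2 * π := by positivity
  have hmem : (fun i => 2 * π * ((-⌊x i / (2 * π)⌋ : ℤ) : ℝ)) ∈ LatT d :=
    mem_LatT.mpr fun i => ⟨-⌊x i / (2 * π)⌋, rfl⟩
  refine ⟨⟨_, hmem⟩, ?_, ?_⟩
  · intro i _
    constructor
    · have := Int.sub_floor_div_mul_nonneg (x i) hπ
      push_cast
      simp only [Pi.add_apply]
      nlinarith [this]
    · have := Int.sub_floor_div_mul_lt (x i) hπ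
      push_cast
      simp only [Pi.add_apply]
      nlinarith [this]
  · intro g hg
    ext i
    have h1 := hg i (Set.mem_univ i)
    have h2 : ∀ i, ((fun i => 2 * π * ((-⌊x i / (2 * π)⌋ : ℤ) : ℝ)) + x) i ∈ Set.Ico (0:ℝ) (2*π) := by
      intro i
      constructor
      · have := Int.sub_floor_div_mul_nonneg (x i) hπ
        push_cast; simp only [Pi.add_apply]; nlinarith [this]
      · have := Int.sub_floor_div_mul_lt (x i) hπ
        push_cast; simp only [Pi.add_apply]; nlinarith [this]
    have hdiff : (g : Fin d → ℝ) - (fun i => 2 * π * ((-⌊x i / (2 * π)⌋ : ℤ) : ℝ)) = 0 := by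
      apply latt_small (sub_mem g.2 hmem)
      intro j
      have ha := hg j (Set.mem_univ j)
      have hb := h2 j
      simp only [Pi.add_apply, Set.mem_Ico] at ha hb
      simp only [Pi.sub_apply]
      rw [abs_lt]
      constructor <;> nlinarith [ha.1, ha.2, hb.1, hb.2]
    have : (g : Fin d → ℝ) = fun i => 2 * π * ((-⌊x i / (2 * π)⌋ : ℤ) : ℝ) := by
      have := sub_eq_zero.mp hdiff; exact this
    rw [this]

lemma isFD_BoxI : IsAddFundamentalDomain (LatT d) (BoxI d) := by
  refine IsAddFundamentalDomain.mk' measurableSet_BoxI.nullMeasurableSet fun x => ?_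
  exact exists_unique_red x

instance : Countable (LatT d) := by
  have hπ : (0:ℝ) < 2 * π := by positivity
  have recon : ∀ v : LatT d, ∀ i, (v : Fin d → ℝ) i
      = 2 * π * ((round ((v : Fin d → ℝ) i / (2 * π)) : ℤ) : ℝ) := by
    intro v i
    obtain ⟨k, hk⟩ := mem_LatT.mp v.2 i
    have : (v : Fin d → ℝ) i / (2 * π) = (k : ℝ) := by
      rw [hk]; field_simp
    rw [this, round_intCast, hk]
  have : Function.Injective
      (fun v : LatT d => (fun i => round ((v : Fin d → ℝ) i / (2 * π)) : Fin d → ℤ)) := by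
    intro v w h
    ext i
    have h' : round ((v : Fin d → ℝ) i / (2 * π)) = round ((w : Fin d → ℝ) i / (2 * π)) := by
      simpa using congrFun h i
    rw [recon v i, recon w i, h']
  exact Function.Injective.countable this

instance : MeasurableVAdd (LatT d) (Fin d → ℝ) where
  measurable_const_vadd c := measurable_const_add (c : Fin d → ℝ)
  measurable_vadd_const x := measurable_subtype_coe.add_const x

instance : VAddInvariantMeasure (LatT d) (Fin d → ℝ) volume :=
  ⟨fun c s hs => by simpa using measure_preimage_add volume (c : Fin d → ℝ) s⟩

lemma det_one_add_smulRight (ℓ : (Fin d → ℝ) →L[ℝ] ℝ) (Ω : Fin d → ℝ) :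
    (ContinuousLinearMap.id ℝ (Fin d → ℝ) + ℓ.smulRight Ω).det
      = 1 + ∑ i, Ω i * ℓ (Pi.single i 1) := by
  classical
  rw [ContinuousLinearMap.det]
  rw [← LinearMap.det_toMatrix (Pi.basisFun ℝ (Fin d))]
  have hM : LinearMap.toMatrix (Pi.basisFun ℝ (Fin d)) (Pi.basisFun ℝ (Fin d))
      (↑(ContinuousLinearMap.id ℝ (Fin d → ℝ) + ℓ.smulRight Ω) : (Fin d → ℝ) →ₗ[ℝ] (Fin d → ℝ))
      = 1 + Matrix.replicateCol Unit Ω * Matrix.replicateRow Unit (fun j => ℓ (Pi.single j 1)) := by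
    ext i j
    simp only [LinearMap.toMatrix_apply, Pi.basisFun_apply, Pi.basisFun_repr,
      ContinuousLinearMap.coe_coe, ContinuousLinearMap.add_apply,
      ContinuousLinearMap.coe_id', id_eq, ContinuousLinearMap.smulRight_apply,
      Pi.add_apply, Pi.smul_apply, smul_eq_mul, Matrix.add_apply, Matrix.mul_apply,
      Matrix.replicateCol_apply, Matrix.replicateRow_apply, Finset.univ_unique, Finset.sum_singleton,
      Matrix.one_apply, Pi.single_apply]
    by_cases hij : i = j <;> simp [hij] <;> ring
  rw [hM, Matrix.det_one_add_replicateCol_mul_replicateRow]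
  simp only [dotProduct]
  congr 1
  exact Finset.sum_congr rfl fun i _ => mul_comm _ _

lemma eqMod2pi_iff_sub_mem {x y : Fin d → ℝ} :
    eqMod2pi x y ↔ x - y ∈ LatT d := by
  rw [mem_LatT]
  refine forall_congr' fun i => exists_congr fun k => ?_
  rw [Pi.sub_apply, sub_eq_iff_eq_add']

/-- if `φ ↦ φ + Y(φ)Ω` induces a bijection of the torus with inverse `Φ`,
then the mean of `m'(φ') = (1+Ω·∂Y(Φ(φ')))² m(Φ(φ'))` equals
`(2π)^{-d} ∫ (1+Ω·∂Y)³ m`, and `|⟨m'⟩−⟨m⟩| ≤ (sup|m|)(3η+3η²+η³)` with `η = sup|Ω·∂Y|`. -/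
theorem mean_of_transformed_quadratic_coefficient (d : ℕ) (hd : 1 ≤ d)
    (Y : (Fin d → ℝ) → ℝ) (hY : ContDiff ℝ 1 Y)
    (hYper : ∀ (φ : Fin d → ℝ) (i : Fin d),
      Y (fun j => φ j + if j = i then 2 * π else 0) = Y φ)
    (Ω : Fin d → ℝ)
    (hpos : ∀ φ, 0 < 1 + ∑ i, Ω i * gradR Y φ i)
    (Φ : (Fin d → ℝ) → (Fin d → ℝ)) (hΦcont : Continuous Φ)
    (hΦdesc : ∀ (φ' : Fin d → ℝ) (i : Fin d),
      eqMod2pi (Φ (fun j => φ' j + if j = i then 2 * π else 0)) (Φ φ'))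
    (hleft : ∀ φ : Fin d → ℝ, eqMod2pi (Φ (fun i => φ i + Y φ * Ω i)) φ)
    (hright : ∀ φ' : Fin d → ℝ, eqMod2pi (fun i => Φ φ' i + Y (Φ φ') * Ω i) φ')
    (m : (Fin d → ℝ) → ℝ) (hm : Continuous m)
    (hmper : ∀ (φ : Fin d → ℝ) (i : Fin d),
      m (fun j => φ j + if j = i then 2 * π else 0) = m φ)
    (m' : (Fin d → ℝ) → ℝ)
    (hm' : ∀ φ', m' φ' = (1 + ∑ i, Ω i * gradR Y (Φ φ') i) ^ 2 * m (Φ φ'))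
    (M η : ℝ)
    (hM : M = sSup ((fun φ => |m φ|) '' boxT d))
    (hη : η = sSup ((fun φ => |∑ i, Ω i * gradR Y φ i|) '' boxT d)) :
    meanT d m' = ((2 * π) ^ d)⁻¹ *
      ∫ x in boxT d, (1 + ∑ i, Ω i * gradR Y x i) ^ 3 * m x ∧
    |meanT d m' - meanT d m| ≤ M * (3 * η + 3 * η ^ 2 + η ^ 3) := by
  classical
  have hπ : (0:ℝ) < 2 * π := by positivity
  set J : (Fin d → ℝ) → ℝ := fun φ => ∑ i, Ω i * gradR Y φ i with hJdef
  set F : (Fin d → ℝ) → (Fin d → ℝ) := fun φ => fun i => φ i + Y φ * Ω i with hFdef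
  have hYdiff : Differentiable ℝ Y := hY.differentiable one_ne_zero
  have hFalt : F = fun φ => φ + Y φ • Ω := by
    funext φ i
    simp [hFdef, Pi.smul_apply, smul_eq_mul]
  set A : (Fin d → ℝ) → ((Fin d → ℝ) →L[ℝ] (Fin d → ℝ)) :=
    fun x => ContinuousLinearMap.id ℝ (Fin d → ℝ) + (fderiv ℝ Y x).smulRight Ω with hAdef
  have hFderiv : ∀ x, HasFDerivAt F (A x) x := by
    intro x
    rw [hFalt]
    exact (hasFDerivAt_id x).add ((hYdiff x).hasFDerivAt.smul_const Ω)
  -- periodicity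
  have hYper' : ∀ (φ : Fin d → ℝ) {v}, v ∈ LatT d → Y (φ + v) = Y φ :=
    fun φ v hv => per_lattice Y hYper φ hv
  have hmper' : ∀ (φ : Fin d → ℝ) {v}, v ∈ LatT d → m (φ + v) = m φ :=
    fun φ v hv => per_lattice m hmper φ hv
  have hgradper : ∀ (φ : Fin d → ℝ) {v}, v ∈ LatT d → fderiv ℝ Y (φ + v) = fderiv ℝ Y φ := by
    intro φ v hv
    have heq : (fun x => Y (x + v)) = Y := funext fun x => hYper' x hv
    have h1 : HasFDerivAt (fun x => Y (x + v)) (fderiv ℝ Y (φ + v)) φ := by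
      have := ((hYdiff (φ + v)).hasFDerivAt.comp φ ((hasFDerivAt_id φ).add_const v))
      exact this
    have h2 := h1.fderiv
    rw [heq] at h2
    rw [← h2]
  have hJper : ∀ (φ : Fin d → ℝ) {v}, v ∈ LatT d → J (φ + v) = J φ := by
    intro φ v hv
    simp only [hJdef, gradR, hgradper φ hv]
  have hJper' : ∀ (φ : Fin d → ℝ) {v}, v ∈ LatT d →
      (∑ i, Ω i * gradR Y (φ + v) i) = ∑ i, Ω i * gradR Y φ i := by
    intro φ v hv
    simp only [gradR, hgradper φ hv]
  have hΦmod : ∀ (φ : Fin d → ℝ) {v}, v ∈ LatT d → Φ (φ + v) - Φ φ ∈ LatT d := by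
    intro φ v hv
    have := per_lattice (fun ψ => ((Φ ψ : Fin d → ℝ) : (Fin d → ℝ) ⧸ LatT d))
      (fun ψ i => (QuotientAddGroup.eq_iff_sub_mem).mpr
        (eqMod2pi_iff_sub_mem.mp (hΦdesc ψ i))) φ hv
    exact (QuotientAddGroup.eq_iff_sub_mem).mp this
  have hFeq : ∀ (φ : Fin d → ℝ) {v}, v ∈ LatT d → F (φ + v) = F φ + v := by
    intro φ v hv
    funext i
    simp only [hFdef, Pi.add_apply, hYper' φ hv]
    ring
  have hleft' : ∀ φ : Fin d → ℝ, Φ (F φ) - φ ∈ LatT d :=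
    fun φ => eqMod2pi_iff_sub_mem.mp (hleft φ)
  have hright' : ∀ φ' : Fin d → ℝ, F (Φ φ') - φ' ∈ LatT d :=
    fun φ' => eqMod2pi_iff_sub_mem.mp (hright φ')
  have hFmodInj : ∀ x y : Fin d → ℝ, F x - F y ∈ LatT d → x - y ∈ LatT d := by
    intro x y hw
    have h1 : F x = F (y + (F x - F y)) := by
      rw [hFeq y hw]
      abel
    have h2 := hleft' x
    rw [h1] at h2
    have h3 := hleft' (y + (F x - F y))
    have h4 : x - y = -(Φ (F (y + (F x - F y))) - x)
        + (Φ (F (y + (F x - F y))) - (y + (F x - F y))) + (F x - F y) := by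
      abel
    rw [h4]
    exact add_mem (add_mem (neg_mem h2) h3) hw
  have hFinjB : Set.InjOn F (BoxI d) := by
    intro a ha b hb hab
    have hmem : a - b ∈ LatT d := by
      apply hFmodInj
      rw [hab]
      simp only [sub_self]
      exact zero_mem _
    have : a - b = 0 := by
      apply latt_small hmem
      intro i
      have ha' := ha i (Set.mem_univ i)
      have hb' := hb i (Set.mem_univ i)
      simp only [Set.mem_Ico] at ha' hb'
      rw [Pi.sub_apply, abs_lt]
      constructor <;> linarith [ha'.1, ha'.2, hb'.1, hb'.2]
    exact sub_eq_zero.mp this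
  have hFcont : Continuous F := by
    rw [hFalt]
    exact continuous_id.add (hY.continuous.smul continuous_const)
  have hSmeas : MeasurableSet (F '' BoxI d) :=
    measurableSet_BoxI.image_of_continuousOn_injOn hFcont.continuousOn hFinjB
  have isFD_S : IsAddFundamentalDomain (LatT d) (F '' BoxI d) := by
    refine IsAddFundamentalDomain.mk' hSmeas.nullMeasurableSet fun x => ?_
    obtain ⟨g₀, hg₀, -⟩ := exists_unique_red (Φ x)
    have hw := hright' x
    have hgmem : (F (Φ x) - x) + (g₀ : Fin d → ℝ) ∈ LatT d := add_mem hw g₀.2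
    refine ⟨⟨_, hgmem⟩, ?_, ?_⟩
    · show ((F (Φ x) - x) + (g₀ : Fin d → ℝ)) + x ∈ F '' BoxI d
      refine ⟨(g₀ : Fin d → ℝ) + Φ x, hg₀, ?_⟩
      have : ((g₀ : Fin d → ℝ) + Φ x) = Φ x + (g₀ : Fin d → ℝ) := by abel
      rw [this, hFeq (Φ x) g₀.2]
      abel
    · intro g hg
      obtain ⟨a, haB, haF⟩ := hg
      have haF' : F a = (g : Fin d → ℝ) + x := haF
      have hx2 : ((F (Φ x) - x) + (g₀ : Fin d → ℝ)) + x ∈ F '' BoxI d := by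
        refine ⟨(g₀ : Fin d → ℝ) + Φ x, hg₀, ?_⟩
        have : ((g₀ : Fin d → ℝ) + Φ x) = Φ x + (g₀ : Fin d → ℝ) := by abel
        rw [this, hFeq (Φ x) g₀.2]
        abel
      obtain ⟨b, hbB, hbF⟩ := hx2
      have hdFF : F a - F b ∈ LatT d := by
        rw [haF', hbF]
        have : (g : Fin d → ℝ) + x - (((F (Φ x) - x) + (g₀ : Fin d → ℝ)) + x)
            = (g : Fin d → ℝ) - ((F (Φ x) - x) + (g₀ : Fin d → ℝ)) := by abel
        rw [this]
        exact sub_mem g.2 hgmem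
      have hab : a - b ∈ LatT d := hFmodInj a b hdFF
      have habz : a - b = 0 := by
        apply latt_small hab
        intro i
        have ha' := haB i (Set.mem_univ i)
        have hb' := hbB i (Set.mem_univ i)
        simp only [Set.mem_Ico] at ha' hb'
        rw [Pi.sub_apply, abs_lt]
        constructor <;> linarith [ha'.1, ha'.2, hb'.1, hb'.2]
      have hFab : F a = F b := by rw [sub_eq_zero.mp habz]
      have : (g : Fin d → ℝ) + x = ((F (Φ x) - x) + (g₀ : Fin d → ℝ)) + x := by
        rw [← haF', ← hbF, hFab]
      ext1
      exact add_right_cancel this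
  have hm'inv : ∀ (g : LatT d) (x : Fin d → ℝ), m' ((g : Fin d → ℝ) + x) = m' x := by
    intro g x
    rw [hm' ((g : Fin d → ℝ) + x), hm' x]
    have hmm : (g : Fin d → ℝ) + x = x + (g : Fin d → ℝ) := by abel
    rw [hmm]
    have hw := hΦmod x g.2
    have hΦeq : Φ (x + (g : Fin d → ℝ)) = Φ x + (Φ (x + (g : Fin d → ℝ)) - Φ x) := by abel
    rw [hΦeq, hJper' (Φ x) hw, hmper' (Φ x) hw]
  -- ae equality of boxes
  have hboxpi : boxT d = Set.univ.pi fun _ : Fin d => Set.Icc (0:ℝ) (2 * π) := by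
    rw [boxT, ← Set.pi_univ_Icc]
    rfl
  have haeBox : (BoxI d : Set (Fin d → ℝ)) =ᵐ[volume] boxT d := by
    rw [MeasureTheory.ae_eq_set]
    constructor
    · have hsub : BoxI d ⊆ boxT d := by
        rw [hboxpi]
        intro x hx i hi
        have := hx i hi
        exact ⟨this.1, le_of_lt this.2⟩
      rw [Set.diff_eq_empty.mpr hsub]
      exact measure_empty
    · have hsub : boxT d \ BoxI d ⊆ ⋃ i, {x : Fin d → ℝ | x i = 2 * π} := by
        rintro x ⟨hx1, hx2⟩
        rw [hboxpi] at hx1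
        simp only [BoxI, Set.mem_pi, Set.mem_univ, forall_true_left] at hx2
        push_neg at hx2
        obtain ⟨i, hi⟩ := hx2
        have h1 := hx1 i (Set.mem_univ i)
        refine Set.mem_iUnion.mpr ⟨i, ?_⟩
        simp only [Set.mem_setOf_eq]
        rw [Set.mem_Ico] at hi
        push_neg at hi
        exact le_antisymm h1.2 (hi h1.1)
      refine measure_mono_null hsub (measure_iUnion_null fun i => ?_)
      rw [MeasureTheory.volume_pi]
      exact MeasureTheory.Measure.pi_hyperplane (fun _ : Fin d => (volume : Measure ℝ)) i (2 * π)
  have hm'cont : Continuous m' := by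
    have hJcont : Continuous J := by
      rw [hJdef]
      refine continuous_finset_sum _ fun i _ => continuous_const.mul ?_
      exact (hY.continuous_fderiv one_ne_zero).clm_apply continuous_const
    have : m' = fun φ' => (1 + J (Φ φ')) ^ 2 * m (Φ φ') := funext fun φ' => hm' φ'
    rw [this]
    fun_prop
  have hJcont : Continuous J := by
    rw [hJdef]
    refine continuous_finset_sum _ fun i _ => continuous_const.mul ?_
    exact (hY.continuous_fderiv one_ne_zero).clm_apply continuous_const
  -- main change of variables chain
  have step1 : ∫ x in boxT d, m' x = ∫ x in BoxI d, m' x :=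
    setIntegral_congr_set haeBox.symm
  have step2 : ∫ x in BoxI d, m' x = ∫ x in F '' BoxI d, m' x :=
    isFD_BoxI.setIntegral_eq isFD_S (f := m') hm'inv
  have step3 : ∫ x in F '' BoxI d, m' x
      = ∫ x in BoxI d, |(A x).det| • m' (F x) :=
    integral_image_eq_integral_abs_det_fderiv_smul volume measurableSet_BoxI
      (fun x _ => (hFderiv x).hasFDerivWithinAt) hFinjB m'
  have hdet : ∀ x, (A x).det = 1 + J x := by
    intro x
    rw [hAdef, hJdef]
    exact det_one_add_smulRight (fderiv ℝ Y x) Ω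
  have step4 : ∀ x, |(A x).det| • m' (F x) = (1 + J x) ^ 3 * m x := by
    intro x
    have hJx : Φ (F x) = x + (Φ (F x) - x) := by abel
    rw [smul_eq_mul, hdet x, abs_of_pos ?hp, hm' (F x), hJx,
      hJper' x (hleft' x), hmper' x (hleft' x)]
    case hp => rw [hJdef]; exact hpos x
    simp only [hJdef]
    ring
  have step5 : ∫ x in BoxI d, (1 + J x) ^ 3 * m x = ∫ x in boxT d, (1 + J x) ^ 3 * m x :=
    setIntegral_congr_set haeBox
  have part1 : meanT d m' = ((2 * π) ^ d)⁻¹ * ∫ x in boxT d, (1 + J x) ^ 3 * m x := by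
    rw [meanT, step1, step2, step3]
    congr 1
    rw [← step5]
    exact setIntegral_congr_fun measurableSet_BoxI fun x _ => step4 x
  refine ⟨part1, ?_⟩
  -- Part 2: the bound
  have hboxcomp : IsCompact (boxT d) := isCompact_Icc
  have hbox0 : (0 : Fin d → ℝ) ∈ boxT d := by
    rw [boxT, Set.mem_Icc]
    exact ⟨le_rfl, fun i => by positivity⟩
  have hMb : ∀ x ∈ boxT d, |m x| ≤ M := by
    intro x hx
    rw [hM]
    exact le_csSup (hboxcomp.bddAbove_image (continuous_abs.comp hm).continuousOn)
      (Set.mem_image_of_mem _ hx)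
  have hηb : ∀ x ∈ boxT d, |J x| ≤ η := by
    intro x hx
    rw [hη]
    exact le_csSup (hboxcomp.bddAbove_image (continuous_abs.comp hJcont).continuousOn)
      (Set.mem_image_of_mem _ hx)
  have hM0 : 0 ≤ M := le_trans (abs_nonneg _) (hMb 0 hbox0)
  have hη0 : 0 ≤ η := le_trans (abs_nonneg _) (hηb 0 hbox0)
  have hint1 : IntegrableOn (fun x => (1 + J x) ^ 3 * m x) (boxT d) :=
    (((continuous_const.add hJcont).pow 3).mul hm).continuousOn.integrableOn_compact hboxcomp
  have hint2 : IntegrableOn m (boxT d) := hm.continuousOn.integrableOn_compact hboxcomp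
  have hdiff : meanT d m' - meanT d m
      = ((2 * π) ^ d)⁻¹ * ∫ x in boxT d, ((1 + J x) ^ 3 - 1) * m x := by
    rw [part1, meanT, ← mul_sub, ← MeasureTheory.integral_sub hint1 hint2]
    congr 1
    apply setIntegral_congr_fun measurableSet_Icc
    intro x _
    ring
  have hvol_lt : volume (boxT d) < ⊤ := by
    rw [boxT, Real.volume_Icc_pi]
    exact ENNReal.prod_lt_top fun i _ => ENNReal.ofReal_lt_top
  have hvol : (volume (boxT d)).toReal = (2 * π) ^ d := by
    rw [boxT, Real.volume_Icc_pi_toReal (fun i => by positivity)]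
    simp [Finset.prod_const]
  have hbound : ∀ x ∈ boxT d, ‖((1 + J x) ^ 3 - 1) * m x‖
      ≤ (3 * η + 3 * η ^ 2 + η ^ 3) * M := by
    intro x hx
    rw [Real.norm_eq_abs, abs_mul]
    have ht : |J x| ≤ η := hηb x hx
    have h1 : |(1 + J x) ^ 3 - 1| ≤ 3 * η + 3 * η ^ 2 + η ^ 3 := by
      have he : (1 + J x) ^ 3 - 1 = 3 * J x + 3 * (J x) ^ 2 + (J x) ^ 3 := by ring
      rw [he]
      have habs : |3 * J x + 3 * (J x) ^ 2 + (J x) ^ 3|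
          ≤ 3 * |J x| + 3 * |J x| ^ 2 + |J x| ^ 3 := by
        calc |3 * J x + 3 * (J x) ^ 2 + (J x) ^ 3|
            ≤ |3 * J x + 3 * (J x) ^ 2| + |(J x) ^ 3| := abs_add_le _ _
          _ ≤ |3 * J x| + |3 * (J x) ^ 2| + |(J x) ^ 3| := by
              linarith [abs_add_le (3 * J x) (3 * (J x) ^ 2)]
          _ = 3 * |J x| + 3 * |J x| ^ 2 + |J x| ^ 3 := by
              rw [abs_mul, abs_mul, abs_pow, abs_pow]
              norm_num
      refine habs.trans ?_
      have h2 : |J x| ^ 2 ≤ η ^ 2 := pow_le_pow_left₀ (abs_nonneg _) ht 2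
      have h3 : |J x| ^ 3 ≤ η ^ 3 := pow_le_pow_left₀ (abs_nonneg _) ht 3
      linarith
    exact mul_le_mul h1 (hMb x hx) (abs_nonneg _) (by positivity)
  have hest : ‖∫ x in boxT d, ((1 + J x) ^ 3 - 1) * m x‖
      ≤ (3 * η + 3 * η ^ 2 + η ^ 3) * M * (volume (boxT d)).toReal :=
    norm_setIntegral_le_of_norm_le_const hvol_lt hbound
  rw [hdiff, abs_mul, abs_inv, abs_pow, abs_of_pos hπ]
  rw [Real.norm_eq_abs, hvol] at hest
  have hpow : (0:ℝ) < (2 * π) ^ d := by positivity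
  calc ((2 * π) ^ d)⁻¹ * |∫ x in boxT d, ((1 + J x) ^ 3 - 1) * m x|
      ≤ ((2 * π) ^ d)⁻¹ * ((3 * η + 3 * η ^ 2 + η ^ 3) * M * (2 * π) ^ d) := by
        apply mul_le_mul_of_nonneg_left hest (by positivity)
    _ = M * (3 * η + 3 * η ^ 2 + η ^ 3) := by
        field_simp


end
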